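/- (Kernel characterization for E_ab⁻¹.) For every integrable f : α → ℝ, the average-free part of B⁻¹·(E_ab⁻¹ f) vanishes μ-almost everywhere if and only if the average-free part of f vanishes μ-almost everywhere; that is, B(x)⁻¹·(E_ab⁻¹ f)(x) = ⟨B⁻¹·(E_ab⁻¹ f)⟩ for μ-a.e. x if and only if f(x) = ⟨f⟩ for μ-a.e. x. -/

import Mathlib

open MeasureTheory

/-- Total (coordinate) volume `V := μ(α)` as a real number. -/
noncomputable def totalVol {α : Type*} [MeasurableSpace α] (μ : Measure α) : ℝ :=
  (μ Set.univ).toReal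

/-- Spatial average `⟨f⟩ := (1/V) ∫ f dμ`. -/
noncomputable def avg {α : Type*} [MeasurableSpace α] (μ : Measure α) (f : α → ℝ) : ℝ :=
  (totalVol μ)⁻¹ * ∫ x, f x ∂μ

/-- The generalized delocalization operator `E_ab`:
`(E_ab f)(x) = ⟨f⟩ + A(x)⁻¹·(B(x)⁻¹·f(x) − ⟨B⁻¹·f⟩)`. -/
noncomputable def opEab {α : Type*} [MeasurableSpace α] (μ : Measure α) (A B : α → ℝ)
    (f : α → ℝ) : α → ℝ :=
  fun x => avg μ f + (A x)⁻¹ * ((B x)⁻¹ * f x - avg μ (fun y => (B y)⁻¹ * f y))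

/-- The operator `E_ab⁻¹`:
`(E_ab⁻¹ h)(x) = B(x)·A(x)·h(x) − B(x)·A(x)·(∫A·h)/(∫A) − B(x)·(∫B·A·h)/(∫B)
  + B(x)·((V + ∫B·A)/(∫B))·(∫A·h)/(∫A)`. -/
noncomputable def opEabInv {α : Type*} [MeasurableSpace α] (μ : Measure α) (A B : α → ℝ)
    (h : α → ℝ) : α → ℝ :=
  fun x => B x * A x * h x
    - B x * A x * (∫ y, A y * h y ∂μ) / (∫ y, A y ∂μ)
    - B x * (∫ y, B y * A y * h y ∂μ) / (∫ y, B y ∂μ)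
    + B x * ((totalVol μ + ∫ y, B y * A y ∂μ) / (∫ y, B y ∂μ))
        * (∫ y, A y * h y ∂μ) / (∫ y, A y ∂μ)

/-- Kernel characterization for `E_ab⁻¹`.
For every integrable `f`, the average-free part of `B⁻¹·(E_ab⁻¹ f)` vanishes μ-a.e.
iff the average-free part of `f` vanishes μ-a.e.:
`B(x)⁻¹·(E_ab⁻¹ f)(x) = ⟨B⁻¹·(E_ab⁻¹ f)⟩` μ-a.e. iff `f(x) = ⟨f⟩` μ-a.e. -/
theorem opEabInv_kernel_characterization
    {α : Type*} [MeasurableSpace α] (μ : Measure α) [IsFiniteMeasure μ]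
    (hV : 0 < totalVol μ)
    (A B : α → ℝ) (hA : Measurable A) (hB : Measurable B)
    (c C : ℝ) (hc : 0 < c) (hcC : c ≤ C)
    (hboundA : ∀ x, c ≤ A x ∧ A x ≤ C) (hboundB : ∀ x, c ≤ B x ∧ B x ≤ C) :
    ∀ f : α → ℝ, Integrable f μ →
      ((∀ᵐ x ∂μ,
          (B x)⁻¹ * opEabInv μ A B f x
            = avg μ (fun y => (B y)⁻¹ * opEabInv μ A B f y))
        ↔ (∀ᵐ x ∂μ, f x = avg μ f)) := by
  intro f hf
  have hApos : ∀ x, 0 < A x := fun x => lt_of_lt_of_le hc (hboundA x).1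
  have hBpos : ∀ x, 0 < B x := fun x => lt_of_lt_of_le hc (hboundB x).1
  have hCpos : 0 < C := lt_of_lt_of_le hc hcC
  have hAint : Integrable A μ := by
    refine (integrable_const C).mono' hA.aestronglyMeasurable ?_
    filter_upwards with x
    rw [Real.norm_eq_abs, abs_of_pos (hApos x)]
    exact (hboundA x).2
  have hAfint : Integrable (fun x => A x * f x) μ :=
    hf.bdd_mul (c := C) hA.aestronglyMeasurable (Filter.Eventually.of_forall fun x => by
      rw [Real.norm_eq_abs, abs_of_pos (hApos x)]; exact (hboundA x).2)
  have hIA : 0 < ∫ y, A y ∂μ := by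
    have h1 : ∫ _y, c ∂μ ≤ ∫ y, A y ∂μ :=
      integral_mono (integrable_const c) hAint fun x => (hboundA x).1
    rw [integral_const] at h1
    refine lt_of_lt_of_le ?_ h1
    have : (0:ℝ) < (μ Set.univ).toReal := hV
    positivity
  set IA := ∫ y, A y ∂μ with hIAdef
  set IAf := ∫ y, A y * f y ∂μ with hIAfdef
  set k₁ := IAf / IA with hk1def
  set d : ℝ := (totalVol μ + ∫ y, B y * A y ∂μ) / (∫ y, B y ∂μ) * IAf / IA
    - (∫ y, B y * A y * f y ∂μ) / (∫ y, B y ∂μ) with hddef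
  have hpt : ∀ x, (B x)⁻¹ * opEabInv μ A B f x = A x * f x - A x * k₁ + d := by
    intro x
    have hBne : B x ≠ 0 := (hBpos x).ne'
    simp only [opEabInv, hddef, hk1def, ← hIAdef, ← hIAfdef]
    field_simp
    ring
  -- the average of the transformed function is d
  have hVne : totalVol μ ≠ 0 := hV.ne'
  have havg : avg μ (fun y => (B y)⁻¹ * opEabInv μ A B f y) = d := by
    have hcongr : (fun y => (B y)⁻¹ * opEabInv μ A B f y)
        = fun y => A y * f y - A y * k₁ + d := funext hpt
    rw [avg, hcongr]
    have hint : ∫ y, (A y * f y - A y * k₁ + d) ∂μ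
        = IAf - k₁ * IA + d * totalVol μ := by
      have h1 : Integrable (fun y => A y * f y - A y * k₁) μ :=
        hAfint.sub (hAint.mul_const k₁)
      rw [integral_add h1 (integrable_const d),
        integral_sub hAfint (hAint.mul_const k₁), integral_mul_const, integral_const]
      simp [totalVol, mul_comm, Measure.real]
      rfl
    rw [hint]
    have hk : k₁ * IA = IAf := div_mul_cancel₀ IAf hIA.ne'
    rw [hk]
    field_simp
    ring
  have hkey : (∀ᵐ x ∂μ, (B x)⁻¹ * opEabInv μ A B f x
      = avg μ (fun y => (B y)⁻¹ * opEabInv μ A B f y)) ↔ (∀ᵐ x ∂μ, f x = k₁) := by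
    rw [havg]
    constructor
    · intro h
      filter_upwards [h] with x hx
      rw [hpt x] at hx
      have : A x * (f x - k₁) = 0 := by linarith [hx]
      have := (mul_eq_zero.1 this).resolve_left (hApos x).ne'
      linarith
    · intro h
      filter_upwards [h] with x hx
      rw [hpt x, hx]
      ring
  rw [hkey]
  constructor
  · intro h
    have hintf : ∫ x, f x ∂μ = k₁ * totalVol μ := by
      rw [integral_congr_ae (h.mono fun x hx => hx), integral_const]
      simp [totalVol, mul_comm, Measure.real]
    have : avg μ f = k₁ := by
      rw [avg, hintf]
      field_simp
    filter_upwards [h] with x hx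
    rw [hx, this]
  · intro h
    have hAf : IAf = IA * avg μ f := by
      rw [hIAfdef, hIAdef, integral_congr_ae (μ := μ)
        (g := fun y => A y * avg μ f) (h.mono fun x hx => by rw [hx]),
        integral_mul_const]
    have : k₁ = avg μ f := by
      rw [hk1def, hAf, mul_comm, mul_div_assoc, div_self hIA.ne', mul_one]
    filter_upwards [h] with x hx
    rw [hx, this]
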